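/- Let L, D, D' be positive integers, X ∈ ℝ^{L×D}, and Σ = (1/L)·XᵀX. Suppose Q : ℝ → ℝ^{D×D'} and O : ℝ → ℝ^{D'×D} are differentiable curves satisfying the gradient-flow equations Q'(t) = −Σ·(Q(t)·O(t) − I)·O(t)ᵀ and O'(t) = −Q(t)ᵀ·Σ·(Q(t)·O(t) − I) for all t ∈ ℝ. Then the map t ↦ Q(t)ᵀ·Q(t) − O(t)·O(t)ᵀ is constant; in particular, if Q(0)ᵀ·Q(0) = O(0)·O(0)ᵀ, then Q(t)ᵀ·Q(t) = O(t)·O(t)ᵀ for all t ∈ ℝ. -/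

import Mathlib

open Matrix

attribute [local instance] Matrix.normedAddCommGroup Matrix.normedSpace

theorem hasDerivAt_matrix_iff {m n : Type*} [Fintype m] [Fintype n]
    {f : ℝ → Matrix m n ℝ} {f' : Matrix m n ℝ} {t : ℝ} :
    HasDerivAt f f' t ↔ ∀ i j, HasDerivAt (fun s => f s i j) (f' i j) t := by
  constructor
  · intro h i j
    exact hasDerivAt_pi.mp (hasDerivAt_pi.mp h i) j
  · intro h
    exact hasDerivAt_pi.mpr fun i => hasDerivAt_pi.mpr fun j => h i j

theorem HasDerivAt.matrix_mul {m n p : Type*} [Fintype m] [Fintype n] [Fintype p]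
    {f : ℝ → Matrix m n ℝ} {g : ℝ → Matrix n p ℝ} {f' : Matrix m n ℝ}
    {g' : Matrix n p ℝ} {t : ℝ}
    (hf : HasDerivAt f f' t) (hg : HasDerivAt g g' t) :
    HasDerivAt (fun s => f s * g s) (f' * g t + f t * g') t := by
  rw [hasDerivAt_matrix_iff] at hf hg ⊢
  intro i j
  have : ∀ s, (f s * g s) i j = ∑ k, f s i k * g s k j := fun s => rfl
  simp only [this]
  have : (f' * g t + f t * g') i j
      = ∑ k, (f' i k * g t k j + f t i k * g' k j) := by
    simp [Matrix.mul_apply, Finset.sum_add_distrib]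
  rw [this]
  exact HasDerivAt.fun_sum fun k _ => (hf i k).mul (hg k j)

theorem HasDerivAt.matrix_transpose {m n : Type*} [Fintype m] [Fintype n]
    {f : ℝ → Matrix m n ℝ} {f' : Matrix m n ℝ} {t : ℝ}
    (hf : HasDerivAt f f' t) :
    HasDerivAt (fun s => (f s)ᵀ) f'ᵀ t := by
  rw [hasDerivAt_matrix_iff] at hf ⊢
  intro i j
  exact hf j i

/-- **Balancedness Invariant**: along the gradient flow
`Q' = −Σ(QO − I)Oᵀ`, `O' = −QᵀΣ(QO − I)` (with `Σ = (1/L)XᵀX`), the quantity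
`QᵀQ − OOᵀ` is constant in time; in particular, if `Q(0)ᵀQ(0) = O(0)O(0)ᵀ`, then
`Q(t)ᵀQ(t) = O(t)O(t)ᵀ` for all `t`. -/
theorem balancedness_invariant (L D D' : ℕ) (hL : 0 < L) (hD : 0 < D) (hD' : 0 < D')
    (X : Matrix (Fin L) (Fin D) ℝ)
    (S : Matrix (Fin D) (Fin D) ℝ) (hS : S = (1 / (L : ℝ)) • (Xᵀ * X))
    (Q : ℝ → Matrix (Fin D) (Fin D') ℝ) (O : ℝ → Matrix (Fin D') (Fin D) ℝ)
    (hQ : ∀ t : ℝ, HasDerivAt Q (-(S * (Q t * O t - 1) * (O t)ᵀ)) t)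
    (hO : ∀ t : ℝ, HasDerivAt O (-((Q t)ᵀ * S * (Q t * O t - 1))) t) :
    (∀ s t : ℝ, (Q s)ᵀ * Q s - O s * (O s)ᵀ = (Q t)ᵀ * Q t - O t * (O t)ᵀ) ∧
    ((Q 0)ᵀ * Q 0 = O 0 * (O 0)ᵀ → ∀ t : ℝ, (Q t)ᵀ * Q t = O t * (O t)ᵀ) := by
  set F : ℝ → Matrix (Fin D') (Fin D') ℝ :=
    fun t => (Q t)ᵀ * Q t - O t * (O t)ᵀ with hF
  have hF' : ∀ t, HasDerivAt F 0 t := by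
    intro t
    have h1 := ((hQ t).matrix_transpose.matrix_mul (hQ t)).sub
      ((hO t).matrix_mul (hO t).matrix_transpose)
    convert h1 using 1
    · rfl
    · rfl
    · rfl
    · rfl
    simp only [Matrix.transpose_neg, Matrix.transpose_mul, Matrix.transpose_transpose,
      Matrix.mul_neg, Matrix.neg_mul, Matrix.mul_assoc]
    abel
  have hconst : ∀ s t : ℝ, F s = F t := by
    intro s t
    exact is_const_of_deriv_eq_zero (fun x => (hF' x).differentiableAt)
      (fun x => (hF' x).deriv) s t
  refine ⟨hconst, fun h0 t => ?_⟩
  have := hconst t 0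
  simp only [hF] at this
  have h := this
  rw [h0] at h
  rw [sub_self] at h
  exact sub_eq_zero.mp h
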